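/- Let U ⊂ ℝ² be open, bounded, convex with x₀ ∈ U and δ = diam(U), and B ∈ H¹(ℝ²). Then ∫_U |A_new(x) − A_av(x)|² dx ≤ δ² ∫_U |B(y) − B_av|² dy, where A_new, A_av, B_av are as in the averaging theorem. -/

import Mathlib

open MeasureTheory

noncomputable section

/-- The canonical magnetic potential `A₀(x₁,x₂) = (−x₂/2, x₁/2)`. -/
def A0 (x : EuclideanSpace ℝ (Fin 2)) : EuclideanSpace ℝ (Fin 2) := WithLp.toLp 2 ![-(x 1)/2, x 0/2]


abbrev E2 := EuclideanSpace ℝ (Fin 2)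

lemma A0_smul (s : ℝ) (z : E2) : A0 (s • z) = s • A0 z := by
  unfold A0
  ext i
  fin_cases i <;>
    simp [PiLp.smul_apply, Matrix.cons_val_zero, Matrix.cons_val_one, Matrix.head_cons,
      smul_eq_mul] <;> ring

lemma norm_sq_eq (z : E2) : ‖z‖ ^ 2 = (z 0) ^ 2 + (z 1) ^ 2 := by
  rw [EuclideanSpace.norm_eq, Real.sq_sqrt (by positivity)]
  simp [Fin.sum_univ_two, sq_abs]

lemma A0_norm_sq (z : E2) : ‖A0 z‖ ^ 2 = ‖z‖ ^ 2 / 4 := by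
  rw [norm_sq_eq, norm_sq_eq]
  unfold A0
  simp [Matrix.cons_val_zero, Matrix.cons_val_one, Matrix.head_cons]
  ring

lemma sq_integral_le {α : Type*} [MeasurableSpace α] (μ : Measure α) [IsProbabilityMeasure μ]
    (f : α → ℝ) (hf : Integrable f μ) (hf2 : Integrable (fun x => f x ^ 2) μ) :
    (∫ x, f x ∂μ) ^ 2 ≤ ∫ x, f x ^ 2 ∂μ := by
  set m := ∫ x, f x ∂μ with hm
  have h0 : 0 ≤ ∫ x, (f x - m) ^ 2 ∂μ := integral_nonneg fun x => sq_nonneg _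
  have hexp : ∫ x, (f x - m) ^ 2 ∂μ = (∫ x, f x ^ 2 ∂μ) - m ^ 2 := by
    have he : ∀ x, (f x - m) ^ 2 = (f x ^ 2 - 2 * m * f x) + m ^ 2 := fun x => by ring
    simp_rw [he]
    have hint : Integrable (fun x => f x ^ 2 - 2 * m * f x) μ := hf2.sub (hf.const_mul (2 * m))
    rw [integral_add hint (integrable_const _),
      integral_sub hf2 (hf.const_mul (2 * m)), MeasureTheory.integral_const_mul, integral_const]
    simp [measure_univ, ← hm]
    ring
  linarith


lemma scaling_le (U : Set E2) (hU_meas : MeasurableSet U) (hU_conv : Convex ℝ U)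
    (x₀ : E2) (hx₀ : x₀ ∈ U) (h : E2 → ℝ) (hh_nonneg : ∀ y, 0 ≤ h y)
    (hh_int : IntegrableOn h U) {s : ℝ} (hs : s ∈ Set.Ioc (0:ℝ) 1) :
    ∫ x in U, s ^ 2 * h (s • (x - x₀) + x₀) ≤ ∫ y in U, h y := by
  obtain ⟨hs0, hs1⟩ := hs
  set φ : E2 → E2 := fun x => s • (x - x₀) + x₀ with hφ
  have hderiv : ∀ x ∈ U, HasFDerivWithinAt φ (s • ContinuousLinearMap.id ℝ E2) U x := by
    intro x hx
    exact (((hasFDerivAt_id x).sub_const x₀).const_smul s |>.add_const x₀).hasFDerivWithinAt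
  have hinj : Set.InjOn φ U := by
    intro a _ b _ hab
    simp only [hφ] at hab
    have := add_right_cancel hab
    have h2 := smul_right_injective E2 (ne_of_gt hs0) this
    exact sub_left_injective h2
  have hdet : |(s • ContinuousLinearMap.id ℝ E2 : E2 →L[ℝ] E2).det| = s ^ 2 := by
    rw [ContinuousLinearMap.det, ContinuousLinearMap.coe_smul, ContinuousLinearMap.coe_id,
      LinearMap.det_smul]
    simp [finrank_euclideanSpace_fin, abs_of_nonneg (by positivity : (0:ℝ) ≤ s ^ 2)]
  have key : ∫ x in φ '' U, h x = ∫ x in U, s ^ 2 * h (φ x) := by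
    rw [integral_image_eq_integral_abs_det_fderiv_smul volume hU_meas hderiv hinj h]
    congr 1
    ext x
    rw [hdet, smul_eq_mul]
  have hsub : φ '' U ⊆ U := by
    rintro _ ⟨x, hx, rfl⟩
    have : φ x = s • x + (1 - s) • x₀ := by
      simp only [hφ, smul_sub, sub_smul, one_smul]
      abel
    rw [this]
    exact hU_conv hx hx₀ (le_of_lt hs0) (by linarith) (by ring)
  calc ∫ x in U, s ^ 2 * h (s • (x - x₀) + x₀) = ∫ x in φ '' U, h x := key.symm
    _ ≤ ∫ y in U, h y := by
        apply setIntegral_mono_set hh_int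
        · exact Filter.Eventually.of_forall fun y => hh_nonneg y
        · exact HasSubset.Subset.eventuallyLE hsub

lemma pointwise_eq (B : E2 → ℝ) (hB : Continuous B) (c : ℝ) (x₀ x : E2) :
    ‖((2:ℝ) • ∫ s in (0:ℝ)..1, B (s • (x - x₀) + x₀) • A0 (s • (x - x₀)))
      - c • A0 (x - x₀)‖ ^ 2
    = (∫ s in (0:ℝ)..1, 2 * s * (B (s • (x - x₀) + x₀) - c)) ^ 2 * (‖x - x₀‖ ^ 2 / 4) := by
  set z := x - x₀ with hz
  have hBs : Continuous fun s : ℝ => B (s • z + x₀) :=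
    hB.comp (by continuity)
  have h1 : (∫ s in (0:ℝ)..1, B (s • z + x₀) • A0 (s • z))
      = (∫ s in (0:ℝ)..1, s * B (s • z + x₀)) • A0 z := by
    rw [← intervalIntegral.integral_smul_const]
    congr 1
    funext s
    rw [A0_smul, smul_smul, mul_comm]
  have h2 : (∫ s in (0:ℝ)..1, 2 * s * (B (s • z + x₀) - c))
      = 2 * (∫ s in (0:ℝ)..1, s * B (s • z + x₀)) - c := by
    have ha : IntervalIntegrable (fun s : ℝ => 2 * (s * B (s • z + x₀))) volume 0 1 :=
      (by continuity : Continuous fun s : ℝ => 2 * (s * B (s • z + x₀))).intervalIntegrable 0 1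
    have hb : IntervalIntegrable (fun s : ℝ => (2 * c) * s) volume 0 1 :=
      (by continuity : Continuous fun s : ℝ => (2 * c) * s).intervalIntegrable 0 1
    have he : ∀ s : ℝ, 2 * s * (B (s • z + x₀) - c)
        = 2 * (s * B (s • z + x₀)) - (2 * c) * s := fun s => by ring
    simp_rw [he]
    rw [intervalIntegral.integral_sub ha hb, intervalIntegral.integral_const_mul,
      intervalIntegral.integral_const_mul, integral_id]
    ring
  rw [h1, smul_smul, ← sub_smul, norm_smul, mul_pow, Real.norm_eq_abs, sq_abs, A0_norm_sq, h2]

/-- Remark 3.2: with `A_new, A_av, B_av` as in the averaging theorem,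
`∫_U |A_new(x) − A_av(x)|² dx ≤ δ² ∫_U |B(y) − B_av|² dy`. -/
theorem stmt_6 (U : Set (EuclideanSpace ℝ (Fin 2)))
    (hU_open : IsOpen U) (hU_bdd : Bornology.IsBounded U) (hU_conv : Convex ℝ U)
    (x₀ : EuclideanSpace ℝ (Fin 2)) (hx₀ : x₀ ∈ U)
    (B : EuclideanSpace ℝ (Fin 2) → ℝ)
    (hB_diff : Differentiable ℝ B)
    (hB_L2 : MemLp B 2 (volume : Measure (EuclideanSpace ℝ (Fin 2))))
    (hB_grad_L2 : MemLp (fun x => fderiv ℝ B x) 2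
      (volume : Measure (EuclideanSpace ℝ (Fin 2)))) :
    ∫ x in U,
        ‖((2:ℝ) • ∫ s in (0:ℝ)..1, B (s • (x - x₀) + x₀) • A0 (s • (x - x₀)))
          - ((volume U).toReal⁻¹ * ∫ y in U, B y) • A0 (x - x₀)‖ ^ 2
      ≤ Metric.diam U ^ 2 *
          ∫ y in U, (B y - (volume U).toReal⁻¹ * ∫ z in U, B z) ^ 2 := by
  set c : ℝ := (volume U).toReal⁻¹ * ∫ y in U, B y with hc
  set δ : ℝ := Metric.diam U with hδ
  have hδ0 : 0 ≤ δ := Metric.diam_nonneg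
  set h : E2 → ℝ := fun y => (B y - c) ^ 2 with hhdef
  have hB_cont : Continuous B := hB_diff.continuous
  have hh_cont : Continuous h := (hB_cont.sub continuous_const).pow 2
  have hh_nonneg : ∀ y, 0 ≤ h y := fun y => sq_nonneg _
  have hU_meas : MeasurableSet U := hU_open.measurableSet
  have hclos : IsCompact (closure U) := hU_bdd.isCompact_closure
  have hh_int : IntegrableOn h U :=
    (hh_cont.continuousOn.integrableOn_compact hclos).mono_set subset_closure
  set ν : Measure ℝ := volume.restrict (Set.Ioc (0:ℝ) 1) with hν
  have : IsProbabilityMeasure ν := by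
    constructor
    rw [hν, Measure.restrict_apply_univ, Real.volume_Ioc]
    norm_num
  set G : E2 → ℝ → ℝ := fun x s => s ^ 2 * h (s • (x - x₀) + x₀) with hGdef
  have hG_cont : Continuous (Function.uncurry G) := by
    apply Continuous.mul
    · exact (continuous_snd.pow 2)
    · exact hh_cont.comp
        ((continuous_snd.smul (continuous_fst.sub continuous_const)).add continuous_const)
  have hGint : Integrable (Function.uncurry G) ((volume.restrict U).prod ν) := by
    rw [hν, Measure.prod_restrict]
    have hK : IntegrableOn (Function.uncurry G) (closure U ×ˢ Set.Icc (0:ℝ) 1)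
        (volume.prod volume) :=
      hG_cont.continuousOn.integrableOn_compact (hclos.prod isCompact_Icc)
    exact hK.mono_set (Set.prod_mono subset_closure Set.Ioc_subset_Icc_self)
  set F : E2 → ℝ := fun x => δ ^ 2 * ∫ s, G x s ∂ν with hFdef
  have hF_int : Integrable F (volume.restrict U) := by
    have := hGint.integral_prod_left
    exact this.const_mul (δ ^ 2)
  -- pointwise bound on U
  have hptw : ∀ x ∈ U,
      ‖((2:ℝ) • ∫ s in (0:ℝ)..1, B (s • (x - x₀) + x₀) • A0 (s • (x - x₀)))
        - c • A0 (x - x₀)‖ ^ 2 ≤ F x := by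
    intro x hx
    rw [pointwise_eq B hB_cont c x₀ x]
    set f : ℝ → ℝ := fun s => 2 * s * (B (s • (x - x₀) + x₀) - c) with hfdef
    have hf_cont : Continuous f := by
      apply Continuous.mul
      · exact continuous_const.mul continuous_id
      · exact (hB_cont.comp ((continuous_id.smul continuous_const).add
          continuous_const)).sub continuous_const
    have hf_int : Integrable f ν :=
      (hf_cont.continuousOn.integrableOn_compact isCompact_Icc).mono_set
        Set.Ioc_subset_Icc_self
    have hf2_int : Integrable (fun s => f s ^ 2) ν :=
      ((hf_cont.pow 2).continuousOn.integrableOn_compact isCompact_Icc).mono_set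
        Set.Ioc_subset_Icc_self
    have hiv : (∫ s in (0:ℝ)..1, f s) = ∫ s, f s ∂ν := by
      rw [intervalIntegral.integral_of_le zero_le_one, hν]
    have hsq : (∫ s in (0:ℝ)..1, f s) ^ 2 ≤ 4 * ∫ s, G x s ∂ν := by
      rw [hiv]
      refine le_trans (sq_integral_le ν f hf_int hf2_int) ?_
      have he : ∀ s, f s ^ 2 = 4 * G x s := by
        intro s
        simp only [hfdef, hGdef, hhdef]
        ring
      simp_rw [he]
      rw [MeasureTheory.integral_const_mul]
    have hnorm : ‖x - x₀‖ ^ 2 / 4 ≤ δ ^ 2 / 4 := by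
      have h1 : ‖x - x₀‖ ≤ δ := by
        rw [← dist_eq_norm]
        exact Metric.dist_le_diam_of_mem hU_bdd hx hx₀
      have := pow_le_pow_left₀ (norm_nonneg (x - x₀)) h1 2
      linarith
    have hG_nonneg : 0 ≤ ∫ s, G x s ∂ν :=
      integral_nonneg fun s => mul_nonneg (sq_nonneg _) (hh_nonneg _)
    calc (∫ s in (0:ℝ)..1, f s) ^ 2 * (‖x - x₀‖ ^ 2 / 4)
        ≤ (4 * ∫ s, G x s ∂ν) * (δ ^ 2 / 4) := by
          apply mul_le_mul hsq hnorm (by positivity) (by positivity)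
      _ = F x := by rw [hFdef]; ring
  have stepA : ∫ x in U,
      ‖((2:ℝ) • ∫ s in (0:ℝ)..1, B (s • (x - x₀) + x₀) • A0 (s • (x - x₀)))
        - c • A0 (x - x₀)‖ ^ 2 ≤ ∫ x in U, F x := by
    apply integral_mono_of_nonneg
    · exact Filter.Eventually.of_forall fun x => by positivity
    · exact hF_int
    · exact (ae_restrict_iff' hU_meas).2 (Filter.Eventually.of_forall hptw)
  have stepB : ∫ x in U, F x ≤ δ ^ 2 * ∫ y in U, h y := by
    have hswap : ∫ x in U, ∫ s, G x s ∂ν = ∫ s, (∫ x in U, G x s) ∂ν :=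
      integral_integral_swap hGint
    have hFeq : ∫ x in U, F x = δ ^ 2 * ∫ s, (∫ x in U, G x s) ∂ν := by
      rw [hFdef, MeasureTheory.integral_const_mul, hswap]
    rw [hFeq]
    apply mul_le_mul_of_nonneg_left _ (by positivity)
    have hinner : ∀ s ∈ Set.Ioc (0:ℝ) 1, ∫ x in U, G x s ≤ ∫ y in U, h y := by
      intro s hs
      exact scaling_le U hU_meas hU_conv x₀ hx₀ h hh_nonneg hh_int hs
    calc ∫ s, (∫ x in U, G x s) ∂ν ≤ ∫ _s, (∫ y in U, h y) ∂ν := by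
          apply integral_mono_ae hGint.integral_prod_right (integrable_const _)
          rw [hν]
          exact (ae_restrict_iff' measurableSet_Ioc).2 (Filter.Eventually.of_forall hinner)
      _ = ∫ y in U, h y := by
          rw [integral_const, probReal_univ, one_smul]
  exact le_trans stepA stepB

end
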